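/- A cubic graph G admits a (2,2)-NZF (i.e. a 2-dimensional flow all of whose values are unit vectors in ℝ²) if and only if G is bipartite. -/

import Mathlib

open scoped BigOperators

noncomputable section

/-- The vector `(x, y)` in the Euclidean plane `ℝ²`. -/
def vec2 (x y : ℝ) : EuclideanSpace ℝ (Fin 2) := (WithLp.equiv 2 (Fin 2 → ℝ)).symm ![x, y]

/-- `f` is a `d`-dimensional nowhere-zero `r`-flow ((r,d)-NZF) on the graph `G`.
We encode an orientation together with a flow as a skew-symmetric function on ordered
pairs of vertices, supported on adjacent pairs, whose values (on edges) have Euclidean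
norm in `[1, r-1]`, and which satisfies Kirchhoff's law at every vertex. -/
def IsNZF {V : Type} [Fintype V] (G : SimpleGraph V) (d : ℕ) (r : ℝ)
    (f : V → V → EuclideanSpace ℝ (Fin d)) : Prop :=
  (∀ u v, f u v = - f v u) ∧
  (∀ u v, ¬ G.Adj u v → f u v = 0) ∧
  (∀ u v, G.Adj u v → 1 ≤ ‖f u v‖ ∧ ‖f u v‖ ≤ r - 1) ∧
  (∀ v, ∑ u, f v u = 0)

/-- `G` admits an `(r,d)`-NZF. -/
def HasNZF {V : Type} [Fintype V] (G : SimpleGraph V) (d : ℕ) (r : ℝ) : Prop :=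
  ∃ f, IsNZF G d r f

/-- A graph is bridgeless if none of its edges is a bridge. -/
def Bridgeless {V : Type} (G : SimpleGraph V) : Prop :=
  ∀ e ∈ G.edgeSet, ¬ G.IsBridge e



lemma cube_eq_one_of (z : ℂ) (habs : ‖z‖ = 1) (hre : z.re = -(1/2)) : z^3 = 1 := by
  have h1 : Complex.normSq z = 1 := by
    rw [← Complex.sq_norm, habs]; norm_num
  rcases z with ⟨x, y⟩
  simp only [Complex.normSq_apply] at h1
  simp only [Complex.ext_iff, pow_succ, pow_zero, one_mul, Complex.mul_re, Complex.mul_im,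
    Complex.one_re, Complex.one_im] at *
  subst hre
  constructor
  · linear_combination (3/2) * h1
  · linear_combination (-y) * h1

lemma cube_aux (a b : ℂ) (ha : ‖a‖ = 1) (hb : ‖b‖ = 1)
    (hab : ‖a + b‖ = 1) : a^3 = b^3 := by
  set u := a * (starRingEnd ℂ) b with hu
  have hbne : b ≠ 0 := by intro h; simp [h] at hb
  have habs : ‖u‖ = 1 := by simp [hu, map_mul, ha, hb]
  have hnb : b * (starRingEnd ℂ) b = 1 := by
    rw [Complex.mul_conj]; norm_cast
    rw [← Complex.sq_norm, hb]; norm_num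
  have hre : u.re = -(1/2) := by
    have h2 : Complex.normSq (a+b) = 1 := by
      rw [← Complex.sq_norm, hab]; norm_num
    have h3 : Complex.normSq a = 1 := by rw [← Complex.sq_norm, ha]; norm_num
    have h4 : Complex.normSq b = 1 := by rw [← Complex.sq_norm, hb]; norm_num
    simp only [Complex.normSq_apply, hu, Complex.mul_re, Complex.conj_re, Complex.conj_im,
      Complex.add_re, Complex.add_im] at *
    nlinarith
  have hcube := cube_eq_one_of u habs hre
  have h5 : a^3 * ((starRingEnd ℂ) b)^3 = 1 := by rw [← mul_pow]; exact hcube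
  have h6 : b^3 * ((starRingEnd ℂ) b)^3 = 1 := by rw [← mul_pow, hnb]; norm_num
  have hcne : ((starRingEnd ℂ) b)^3 ≠ 0 := pow_ne_zero _ (star_ne_zero.mpr hbne)
  exact mul_right_cancel₀ hcne (h5.trans h6.symm)

lemma cube3 (x y z : ℂ) (hx : ‖x‖ = 1) (hy : ‖y‖ = 1)
    (hz : ‖z‖ = 1) (hsum : x + y + z = 0) : x^3 = y^3 := by
  have h : x + y = -z := by linear_combination hsum
  exact cube_aux x y hx hy (by rw [h, norm_neg]; exact hz)

/-- The complex number corresponding to a vector in `ℝ²`. -/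
def toC : EuclideanSpace ℝ (Fin 2) →+ ℂ :=
  AddMonoidHom.mk' (fun x => ⟨x 0, x 1⟩) (by
    intro x y
    apply Complex.ext <;> simp [PiLp.add_apply])

lemma abs_toC (x : EuclideanSpace ℝ (Fin 2)) : ‖toC x‖ = ‖x‖ := by
  rw [Complex.norm_def, Complex.normSq_apply, EuclideanSpace.norm_eq]
  simp [Fin.sum_univ_two, Real.norm_eq_abs, AddMonoidHom.mk', toC]
  ring_nf

lemma half_lemma (a b : ℝ) (h : ¬(a = 0 ∧ b = 0)) :
    (0 < -b ∨ (-b = 0 ∧ 0 < -a)) ↔ ¬(0 < b ∨ (b = 0 ∧ 0 < a)) := by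
  push_neg
  constructor
  · rintro (h1 | ⟨h1, h2⟩)
    · exact ⟨by linarith, fun hb => by linarith⟩
    · exact ⟨by linarith, fun hb => by linarith⟩
  · rintro ⟨h1, h2⟩
    rcases lt_trichotomy b 0 with hb|hb|hb
    · left; linarith
    · right
      refine ⟨by linarith, ?_⟩
      have ha2 := h2 hb
      rcases lt_trichotomy a 0 with ha|ha|ha
      · linarith
      · exact absurd ⟨ha, hb⟩ h
      · linarith
    · exact absurd hb (not_lt.mpr h1)

lemma forward {V : Type} [Fintype V] (G : SimpleGraph V) [DecidableRel G.Adj]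
    (hcubic : ∀ v, G.degree v = 3) (f : V → V → EuclideanSpace ℝ (Fin 2))
    (hf : IsNZF G 2 2 f) : G.Colorable 2 := by
  classical
  obtain ⟨hskew, hsupp, hnorm, hkirch⟩ := hf
  set g : V → V → ℂ := fun u v => toC (f u v) with hg
  have habs : ∀ u v, G.Adj u v → ‖g u v‖ = 1 := by
    intro u v h
    rw [hg, abs_toC]
    have := hnorm u v h
    linarith [this.1, this.2]
  have hgskew : ∀ u v, g u v = - g v u := by
    intro u v; rw [hg]; simp only; rw [hskew u v, map_neg]
  have hgsum : ∀ v, ∑ u, g v u = 0 := by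
    intro v
    rw [hg]; simp only
    rw [← map_sum, hkirch v, map_zero]
  have hgzero : ∀ u v, ¬ G.Adj u v → g u v = 0 := by
    intro u v h; rw [hg]; simp only; rw [hsupp u v h, map_zero]
  have hnbr : ∀ v, ∃ u, G.Adj v u := by
    intro v
    have h3 := hcubic v
    have : (G.neighborFinset v).Nonempty := by
      rw [← Finset.card_pos, SimpleGraph.card_neighborFinset_eq_degree, h3]; norm_num
    obtain ⟨u, hu⟩ := this
    exact ⟨u, (SimpleGraph.mem_neighborFinset G v u).mp hu⟩
  have key : ∀ v u w, G.Adj v u → G.Adj v w → (g v u)^3 = (g v w)^3 := by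
    intro v u w hu hw
    have h3 : (G.neighborFinset v).card = 3 := by
      rw [SimpleGraph.card_neighborFinset_eq_degree]; exact hcubic v
    obtain ⟨a, b, c, hab, hac, hbc, habc⟩ := Finset.card_eq_three.mp h3
    have hA : G.Adj v a := by
      rw [← SimpleGraph.mem_neighborFinset, habc]; simp
    have hB : G.Adj v b := by
      rw [← SimpleGraph.mem_neighborFinset, habc]; simp
    have hC : G.Adj v c := by
      rw [← SimpleGraph.mem_neighborFinset, habc]; simp
    have hsum3 : g v a + g v b + g v c = 0 := by
      have he : ∑ u, g v u = ∑ u ∈ G.neighborFinset v, g v u :=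
        (Finset.sum_subset (Finset.subset_univ _) (fun x _ hx =>
          hgzero v x (fun h => hx ((SimpleGraph.mem_neighborFinset G v x).mpr h)))).symm
      rw [habc] at he
      rw [Finset.sum_insert (by simp [hab, hac]), Finset.sum_insert (by simp [hbc]),
        Finset.sum_singleton] at he
      rw [← add_assoc] at he
      rw [← he]; exact hgsum v
    have pair : ∀ x y z : V, G.Adj v x → G.Adj v y → G.Adj v z →
        g v x + g v y + g v z = 0 → (g v x)^3 = (g v y)^3 := fun x y z hx hy hz hs =>
      cube3 _ _ _ (habs v x hx) (habs v y hy) (habs v z hz) hs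
    have hu' : u ∈ ({a, b, c} : Finset V) := by
      rw [← habc, SimpleGraph.mem_neighborFinset]; exact hu
    have hw' : w ∈ ({a, b, c} : Finset V) := by
      rw [← habc, SimpleGraph.mem_neighborFinset]; exact hw
    simp only [Finset.mem_insert, Finset.mem_singleton] at hu' hw'
    rcases hu' with rfl|rfl|rfl <;> rcases hw' with rfl|rfl|rfl <;>
      first
        | rfl
        | exact pair _ _ a hu hw hA (by linear_combination hsum3)
        | exact pair _ _ b hu hw hB (by linear_combination hsum3)
        | exact pair _ _ c hu hw hC (by linear_combination hsum3)
  set s : V → ℂ := fun v => (g v (hnbr v).choose)^3 with hsdef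
  have hs_eq : ∀ v u, G.Adj v u → (g v u)^3 = s v := fun v u h =>
    key v u _ h (hnbr v).choose_spec
  have hs_abs : ∀ v, ‖s v‖ = 1 := by
    intro v
    rw [← hs_eq v _ (hnbr v).choose_spec, norm_pow, habs v _ (hnbr v).choose_spec, one_pow]
  have hs_adj : ∀ u v, G.Adj u v → s u = - s v := by
    intro u v h
    rw [← hs_eq u v h, ← hs_eq v u h.symm, hgskew u v]
    ring
  refine ⟨SimpleGraph.Coloring.mk
    (fun v => if (0 < (s v).im ∨ ((s v).im = 0 ∧ 0 < (s v).re)) then 0 else 1) ?_⟩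
  intro u v h
  have hne : ¬((s v).re = 0 ∧ (s v).im = 0) := by
    intro hz
    have h0 : s v = 0 := Complex.ext hz.1 hz.2
    have ha := hs_abs v
    rw [h0, norm_zero] at ha
    norm_num at ha
  have hmain := half_lemma (s v).re (s v).im hne
  have hsu := hs_adj u v h
  rw [hsu]
  simp only [Complex.neg_im, Complex.neg_re] at hmain ⊢
  by_cases hv : (0 < (s v).im ∨ ((s v).im = 0 ∧ 0 < (s v).re))
  · rw [if_pos hv, if_neg (by rw [hmain]; exact fun h' => h' hv)]
    simp
  · rw [if_neg hv, if_pos (hmain.mpr hv)]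
    simp

lemma count_le {ι α : Type} [DecidableEq ι] [DecidableEq α] (s : Finset ι) (t : ι → Finset α)
    (k : ℕ) (hk : 0 < k) (hlow : ∀ i ∈ s, k ≤ (t i).card)
    (hup : ∀ b ∈ s.biUnion t, (s.filter (fun i => b ∈ t i)).card ≤ k) :
    s.card ≤ (s.biUnion t).card := by
  classical
  set P := (s ×ˢ s.biUnion t).filter (fun p => p.2 ∈ t p.1) with hP
  have hmemP : ∀ p : ι × α, p ∈ P ↔ p.1 ∈ s ∧ p.2 ∈ t p.1 := by
    intro p
    simp only [hP, Finset.mem_filter, Finset.mem_product, Finset.mem_biUnion]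
    constructor
    · rintro ⟨⟨h1, _⟩, h3⟩; exact ⟨h1, h3⟩
    · rintro ⟨h1, h2⟩; exact ⟨⟨h1, ⟨p.1, h1, h2⟩⟩, h2⟩
  have h1 : P.card = ∑ i ∈ s, (t i).card := by
    rw [Finset.card_eq_sum_card_fiberwise (f := Prod.fst) (t := s)
      (fun p hp => ((hmemP p).mp hp).1)]
    refine Finset.sum_congr rfl fun i hi => ?_
    refine Finset.card_bij' (fun p _ => p.2) (fun b _ => (i, b)) ?_ ?_ ?_ ?_
    · intro p hp
      rw [Finset.mem_filter] at hp
      have := (hmemP p).mp hp.1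
      exact hp.2 ▸ this.2
    · intro b hb
      rw [Finset.mem_filter, hmemP]
      exact ⟨⟨hi, hb⟩, rfl⟩
    · intro p hp
      rw [Finset.mem_filter] at hp
      exact Prod.ext hp.2.symm rfl
    · intro b _; rfl
  have h2 : P.card = ∑ b ∈ s.biUnion t, (s.filter (fun i => b ∈ t i)).card := by
    rw [Finset.card_eq_sum_card_fiberwise (f := Prod.snd) (t := s.biUnion t)
      (fun p hp => by
        have := (hmemP p).mp hp
        exact Finset.mem_biUnion.mpr ⟨p.1, this.1, this.2⟩)]
    refine Finset.sum_congr rfl fun b hb => ?_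
    refine Finset.card_bij' (fun p _ => p.1) (fun i _ => (i, b)) ?_ ?_ ?_ ?_
    · intro p hp
      rw [Finset.mem_filter] at hp ⊢
      have := (hmemP p).mp hp.1
      exact ⟨this.1, hp.2 ▸ this.2⟩
    · intro i hi
      rw [Finset.mem_filter] at hi ⊢
      exact ⟨(hmemP _).mpr ⟨hi.1, hi.2⟩, rfl⟩
    · intro p hp
      rw [Finset.mem_filter] at hp
      exact Prod.ext rfl hp.2.symm
    · intro i _; rfl
  have hle1 : k * s.card ≤ P.card := by
    rw [h1, mul_comm]
    calc s.card * k = ∑ _i ∈ s, k := by rw [Finset.sum_const, smul_eq_mul]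
    _ ≤ ∑ i ∈ s, (t i).card := Finset.sum_le_sum hlow
  have hle2 : P.card ≤ k * (s.biUnion t).card := by
    rw [h2, mul_comm]
    calc ∑ b ∈ s.biUnion t, (s.filter (fun i => b ∈ t i)).card
        ≤ ∑ _b ∈ s.biUnion t, k := Finset.sum_le_sum hup
    _ = (s.biUnion t).card * k := by rw [Finset.sum_const, smul_eq_mul]
  exact Nat.le_of_mul_le_mul_left (hle1.trans hle2) hk

lemma vec2_apply_zero (x y : ℝ) : vec2 x y 0 = x := by
  simp [vec2, WithLp.equiv_symm_apply]

lemma vec2_apply_one (x y : ℝ) : vec2 x y 1 = y := by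
  simp [vec2, WithLp.equiv_symm_apply]

lemma norm_vec2 (x y : ℝ) : ‖vec2 x y‖ = Real.sqrt (x^2 + y^2) := by
  rw [EuclideanSpace.norm_eq]
  simp [Fin.sum_univ_two, vec2_apply_zero, vec2_apply_one, Real.norm_eq_abs, sq_abs]

lemma norm_e0 : ‖vec2 1 0‖ = 1 := by
  rw [norm_vec2]; norm_num

lemma norm_e1 : ‖vec2 (-(1/2)) (Real.sqrt 3 / 2)‖ = 1 := by
  rw [norm_vec2, div_pow, Real.sq_sqrt (by norm_num : (3:ℝ) ≥ 0)]
  norm_num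

lemma norm_e2 : ‖vec2 (-(1/2)) (-(Real.sqrt 3 / 2))‖ = 1 := by
  rw [norm_vec2, neg_pow (Real.sqrt 3 / 2), div_pow, Real.sq_sqrt (by norm_num : (3:ℝ) ≥ 0)]
  norm_num

lemma esum : vec2 1 0 + vec2 (-(1/2)) (Real.sqrt 3 / 2) + vec2 (-(1/2)) (-(Real.sqrt 3 / 2)) = 0 := by
  apply PiLp.ext
  intro i
  fin_cases i <;>
    simp [PiLp.add_apply, PiLp.zero_apply, vec2_apply_zero, vec2_apply_one] <;> ring

lemma backward {V : Type} [Fintype V] (G : SimpleGraph V) [DecidableRel G.Adj]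
    (hcubic : ∀ v, G.degree v = 3) (hcol : G.Colorable 2) : HasNZF G 2 2 := by
  classical
  obtain ⟨C⟩ := hcol
  set c : V → Fin 2 := fun v => C v with hc
  have hcadj : ∀ {u v}, G.Adj u v → c u ≠ c v := fun h => C.valid h
  have fin2 : ∀ x : Fin 2, x ≠ 0 → x = 1 := by decide
  have hadj01 : ∀ {u v}, G.Adj u v → c u = 0 → c v = 1 := fun h h0 =>
    fin2 _ (fun hv => hcadj h (h0.trans hv.symm))
  have hadj10 : ∀ {u v}, G.Adj u v → c u ≠ 0 → c v = 0 := by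
    intro u v h hu
    by_contra hv
    exact hcadj h ((fin2 _ hu).trans (fin2 _ hv).symm)
  have hdeg : ∀ v, (G.neighborFinset v).card = 3 := fun v => by
    rw [SimpleGraph.card_neighborFinset_eq_degree]; exact hcubic v
  -- the two colour classes have the same size
  have cardAB : (Finset.univ.filter (fun v => c v = 0)).card
      = (Finset.univ.filter (fun v => c v = 1)).card := by
    set FA := Finset.univ.filter (fun v => c v = 0) with hFA
    set FB := Finset.univ.filter (fun v => c v = 1) with hFB
    set E := Finset.univ.filter (fun p : V × V => G.Adj p.1 p.2 ∧ c p.1 = 0) with hE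
    have hmemE : ∀ p : V × V, p ∈ E ↔ G.Adj p.1 p.2 ∧ c p.1 = 0 := by
      intro p; simp [hE]
    have h1 : E.card = ∑ a ∈ FA, (G.neighborFinset a).card := by
      rw [Finset.card_eq_sum_card_fiberwise (f := Prod.fst) (t := FA)
        (fun p hp => by simp [hFA, ((hmemE p).mp hp).2])]
      refine Finset.sum_congr rfl fun a ha => ?_
      have hca : c a = 0 := by simpa [hFA] using ha
      refine Finset.card_bij' (fun p _ => p.2) (fun u _ => (a, u)) ?_ ?_ ?_ ?_
      · intro p hp; rw [Finset.mem_filter] at hp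
        have h2 := (hmemE p).mp hp.1
        rw [SimpleGraph.mem_neighborFinset]
        exact hp.2 ▸ h2.1
      · intro u hu; rw [Finset.mem_filter]
        rw [SimpleGraph.mem_neighborFinset] at hu
        exact ⟨(hmemE _).mpr ⟨hu, hca⟩, rfl⟩
      · intro p hp; rw [Finset.mem_filter] at hp; exact Prod.ext hp.2.symm rfl
      · intro u _; rfl
    have h2 : E.card = ∑ b ∈ FB, (G.neighborFinset b).card := by
      rw [Finset.card_eq_sum_card_fiberwise (f := Prod.snd) (t := FB) (fun p hp => by
        have h3 := (hmemE p).mp hp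
        simp [hFB, hadj01 h3.1 h3.2])]
      refine Finset.sum_congr rfl fun b hb => ?_
      have hcb : c b = 1 := by simpa [hFB] using hb
      refine Finset.card_bij' (fun p _ => p.1) (fun u _ => (u, b)) ?_ ?_ ?_ ?_
      · intro p hp; rw [Finset.mem_filter] at hp
        have h3 := (hmemE p).mp hp.1
        rw [SimpleGraph.mem_neighborFinset]
        exact hp.2 ▸ h3.1.symm
      · intro u hu; rw [Finset.mem_filter]
        rw [SimpleGraph.mem_neighborFinset] at hu
        refine ⟨(hmemE _).mpr ⟨hu.symm, ?_⟩, rfl⟩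
        exact hadj10 hu (by rw [hcb]; exact one_ne_zero)
      · intro p hp; rw [Finset.mem_filter] at hp; exact Prod.ext rfl hp.2.symm
      · intro u _; rfl
    have e1 : ∑ a ∈ FA, (G.neighborFinset a).card = 3 * FA.card := by
      rw [Finset.sum_congr rfl (fun a _ => hdeg a), Finset.sum_const, smul_eq_mul, mul_comm]
    have e2 : ∑ b ∈ FB, (G.neighborFinset b).card = 3 * FB.card := by
      rw [Finset.sum_congr rfl (fun b _ => hdeg b), Finset.sum_const, smul_eq_mul, mul_comm]
    rw [e1] at h1; rw [e2] at h2
    omega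
  have cardAB' : Fintype.card {v : V // c v = 0} = Fintype.card {v : V // c v = 1} := by
    rw [Fintype.card_subtype, Fintype.card_subtype]; exact cardAB
  set A := {v : V // c v = 0} with hA
  set N : A → Finset V := fun a => G.neighborFinset a.val with hN
  -- first matching
  have hall0 : ∀ s : Finset A, s.card ≤ (s.biUnion N).card := by
    intro s
    apply count_le s N 3 (by norm_num)
    · intro a _; rw [hN]; rw [hdeg]
    · intro b _
      calc (s.filter fun a => b ∈ N a).card ≤ (G.neighborFinset b).card := by
            apply Finset.card_le_card_of_injOn (fun a => a.val)
            · intro a ha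
              rw [Finset.mem_coe, Finset.mem_filter] at ha
              rw [Finset.mem_coe, SimpleGraph.mem_neighborFinset]
              exact ((SimpleGraph.mem_neighborFinset _ _ _).mp ha.2).symm
            · exact fun a _ a' _ h => Subtype.ext h
        _ = 3 := hdeg b
  obtain ⟨σ0, hσ0inj, hσ0mem⟩ := (Finset.all_card_le_biUnion_card_iff_exists_injective N).mp hall0
  have hσ0adj : ∀ a : A, G.Adj a.val (σ0 a) := fun a =>
    (SimpleGraph.mem_neighborFinset _ _ _).mp (hσ0mem a)
  have hσ0c : ∀ a : A, c (σ0 a) = 1 := fun a => hadj01 (hσ0adj a) a.prop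
  have hτ0 : Function.Bijective (fun a : A => (⟨σ0 a, hσ0c a⟩ : {v : V // c v = 1})) :=
    (Fintype.bijective_iff_injective_and_card _).mpr
      ⟨fun a a' h => hσ0inj (congrArg Subtype.val h), cardAB'⟩
  have hσ0surj : ∀ b : V, c b = 1 → ∃ a : A, σ0 a = b := by
    intro b hb
    obtain ⟨a, ha⟩ := hτ0.surjective ⟨b, hb⟩
    exact ⟨a, congrArg Subtype.val ha⟩
  -- second matching
  set N1 : A → Finset V := fun a => (N a).erase (σ0 a) with hN1
  have hcb_of_mem : ∀ (a : A) b, b ∈ N a → c b = 1 := fun a b hb =>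
    hadj01 ((SimpleGraph.mem_neighborFinset _ _ _).mp hb) a.prop
  have hall1 : ∀ s : Finset A, s.card ≤ (s.biUnion N1).card := by
    intro s
    apply count_le s N1 2 (by norm_num)
    · intro a _
      rw [hN1]
      simp only
      rw [Finset.card_erase_of_mem (hσ0mem a), hN, hdeg]
    · intro b hb
      obtain ⟨a', _, hbn⟩ := Finset.mem_biUnion.mp hb
      have hb1 : c b = 1 := hcb_of_mem a' b (Finset.mem_erase.mp hbn).2
      obtain ⟨a0, ha0⟩ := hσ0surj b hb1
      have ha0adj : a0.val ∈ G.neighborFinset b := by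
        rw [SimpleGraph.mem_neighborFinset]
        exact (ha0 ▸ hσ0adj a0).symm
      calc (s.filter fun a => b ∈ N1 a).card ≤ ((G.neighborFinset b).erase a0.val).card := by
            apply Finset.card_le_card_of_injOn (fun a => a.val)
            · intro a ha
              rw [Finset.mem_coe, Finset.mem_filter] at ha
              obtain ⟨hbne, hbN⟩ := Finset.mem_erase.mp ha.2
              rw [Finset.mem_coe, Finset.mem_erase]
              constructor
              · intro hval
                exact hbne (by rw [← ha0]; congr 1; exact (Subtype.ext hval).symm)
              · rw [SimpleGraph.mem_neighborFinset]
                exact ((SimpleGraph.mem_neighborFinset _ _ _).mp hbN).symm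
            · exact fun a _ a' _ h => Subtype.ext h
        _ = 2 := by rw [Finset.card_erase_of_mem ha0adj, hdeg]
  obtain ⟨σ1, hσ1inj, hσ1mem⟩ := (Finset.all_card_le_biUnion_card_iff_exists_injective N1).mp hall1
  have hσ1memN : ∀ a : A, σ1 a ∈ N a := fun a => (Finset.mem_erase.mp (hσ1mem a)).2
  have hσ1ne0 : ∀ a : A, σ1 a ≠ σ0 a := fun a => (Finset.mem_erase.mp (hσ1mem a)).1
  have hσ1adj : ∀ a : A, G.Adj a.val (σ1 a) := fun a =>
    (SimpleGraph.mem_neighborFinset _ _ _).mp (hσ1memN a)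
  have hσ1c : ∀ a : A, c (σ1 a) = 1 := fun a => hadj01 (hσ1adj a) a.prop
  have hτ1 : Function.Bijective (fun a : A => (⟨σ1 a, hσ1c a⟩ : {v : V // c v = 1})) :=
    (Fintype.bijective_iff_injective_and_card _).mpr
      ⟨fun a a' h => hσ1inj (congrArg Subtype.val h), cardAB'⟩
  have hσ1surj : ∀ b : V, c b = 1 → ∃ a : A, σ1 a = b := by
    intro b hb
    obtain ⟨a, ha⟩ := hτ1.surjective ⟨b, hb⟩
    exact ⟨a, congrArg Subtype.val ha⟩
  -- third matching
  set N2 : A → Finset V := fun a => ((N a).erase (σ0 a)).erase (σ1 a) with hN2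
  have hall2 : ∀ s : Finset A, s.card ≤ (s.biUnion N2).card := by
    intro s
    apply count_le s N2 1 (by norm_num)
    · intro a _
      rw [hN2]
      simp only
      rw [Finset.card_erase_of_mem (hσ1mem a), Finset.card_erase_of_mem (hσ0mem a), hN, hdeg]
    · intro b hb
      obtain ⟨a', _, hbn⟩ := Finset.mem_biUnion.mp hb
      have hb1 : c b = 1 := hcb_of_mem a' b (Finset.mem_erase.mp (Finset.mem_erase.mp hbn).2).2
      obtain ⟨a0, ha0⟩ := hσ0surj b hb1
      obtain ⟨a1, ha1⟩ := hσ1surj b hb1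
      have ha01 : a0 ≠ a1 := by
        intro h
        exact hσ1ne0 a1 (by rw [ha1, ← h, ha0])
      have ha0adj : a0.val ∈ G.neighborFinset b := by
        rw [SimpleGraph.mem_neighborFinset]
        exact (ha0 ▸ hσ0adj a0).symm
      have ha1adj : a1.val ∈ ((G.neighborFinset b).erase a0.val) := by
        rw [Finset.mem_erase]
        refine ⟨fun h => ha01 (Subtype.ext h).symm, ?_⟩
        rw [SimpleGraph.mem_neighborFinset]
        exact (ha1 ▸ hσ1adj a1).symm
      calc (s.filter fun a => b ∈ N2 a).card
          ≤ (((G.neighborFinset b).erase a0.val).erase a1.val).card := by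
            apply Finset.card_le_card_of_injOn (fun a => a.val)
            · intro a ha
              rw [Finset.mem_coe, Finset.mem_filter] at ha
              obtain ⟨hbne1, hrest⟩ := Finset.mem_erase.mp ha.2
              obtain ⟨hbne0, hbN⟩ := Finset.mem_erase.mp hrest
              rw [Finset.mem_coe, Finset.mem_erase, Finset.mem_erase]
              refine ⟨?_, ?_, ?_⟩
              · intro hval
                exact hbne1 (by rw [← ha1]; congr 1; exact (Subtype.ext hval).symm)
              · intro hval
                exact hbne0 (by rw [← ha0]; congr 1; exact (Subtype.ext hval).symm)
              · rw [SimpleGraph.mem_neighborFinset]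
                exact ((SimpleGraph.mem_neighborFinset _ _ _).mp hbN).symm
            · exact fun a _ a' _ h => Subtype.ext h
        _ = 1 := by
            rw [Finset.card_erase_of_mem ha1adj, Finset.card_erase_of_mem ha0adj, hdeg]
  obtain ⟨σ2, hσ2inj, hσ2mem⟩ := (Finset.all_card_le_biUnion_card_iff_exists_injective N2).mp hall2
  have hσ2ne1 : ∀ a : A, σ2 a ≠ σ1 a := fun a => (Finset.mem_erase.mp (hσ2mem a)).1
  have hσ2ne0 : ∀ a : A, σ2 a ≠ σ0 a := fun a =>
    (Finset.mem_erase.mp (Finset.mem_erase.mp (hσ2mem a)).2).1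
  have hσ2memN : ∀ a : A, σ2 a ∈ N a := fun a =>
    (Finset.mem_erase.mp (Finset.mem_erase.mp (hσ2mem a)).2).2
  have hσ2adj : ∀ a : A, G.Adj a.val (σ2 a) := fun a =>
    (SimpleGraph.mem_neighborFinset _ _ _).mp (hσ2memN a)
  have hσ2c : ∀ a : A, c (σ2 a) = 1 := fun a => hadj01 (hσ2adj a) a.prop
  have hτ2 : Function.Bijective (fun a : A => (⟨σ2 a, hσ2c a⟩ : {v : V // c v = 1})) :=
    (Fintype.bijective_iff_injective_and_card _).mpr
      ⟨fun a a' h => hσ2inj (congrArg Subtype.val h), cardAB'⟩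
  have hσ2surj : ∀ b : V, c b = 1 → ∃ a : A, σ2 a = b := by
    intro b hb
    obtain ⟨a, ha⟩ := hτ2.surjective ⟨b, hb⟩
    exact ⟨a, congrArg Subtype.val ha⟩
  -- neighbourhoods are exactly the three matched vertices
  have hNeq : ∀ a : A, G.neighborFinset a.val = {σ0 a, σ1 a, σ2 a} := by
    intro a
    refine (Finset.eq_of_subset_of_card_le ?_ ?_).symm
    · intro x hx
      simp only [Finset.mem_insert, Finset.mem_singleton] at hx
      rcases hx with rfl|rfl|rfl
      · exact hσ0mem a
      · exact hσ1memN a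
      · exact hσ2memN a
    · rw [hdeg]
      rw [Finset.card_insert_of_notMem (by
          simp only [Finset.mem_insert, Finset.mem_singleton]
          push_neg
          exact ⟨fun h => hσ1ne0 a h.symm, fun h => hσ2ne0 a h.symm⟩),
        Finset.card_insert_of_notMem (by
          simp only [Finset.mem_singleton]
          exact fun h => hσ2ne1 a h.symm),
        Finset.card_singleton]
  -- the three unit vectors
  set E0 : EuclideanSpace ℝ (Fin 2) := vec2 1 0 with hE0
  set E1 : EuclideanSpace ℝ (Fin 2) := vec2 (-(1/2)) (Real.sqrt 3 / 2) with hE1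
  set E2 : EuclideanSpace ℝ (Fin 2) := vec2 (-(1/2)) (-(Real.sqrt 3 / 2)) with hE2
  set g0 : V → V → EuclideanSpace ℝ (Fin 2) := fun u v =>
    if h : c u = 0 then
      (if v = σ0 ⟨u, h⟩ then E0 else if v = σ1 ⟨u, h⟩ then E1
        else if v = σ2 ⟨u, h⟩ then E2 else 0)
    else 0 with hg0
  have hg0_B : ∀ u v, c u ≠ 0 → g0 u v = 0 := by
    intro u v h; rw [hg0]; exact dif_neg h
  have hg0_nonadj : ∀ u v, ¬ G.Adj u v → g0 u v = 0 := by
    intro u v hnadj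
    rw [hg0]
    simp only
    split_ifs with h h0 h1 h2
    · exact absurd (by rw [h0]; exact hσ0adj ⟨u, h⟩) hnadj
    · exact absurd (by rw [h1]; exact hσ1adj ⟨u, h⟩) hnadj
    · exact absurd (by rw [h2]; exact hσ2adj ⟨u, h⟩) hnadj
    · rfl
    · rfl
  have hg0_norm : ∀ u v, G.Adj u v → ∀ (h : c u = 0), ‖g0 u v‖ = 1 := by
    intro u v hadj h
    have hv : v ∈ ({σ0 ⟨u,h⟩, σ1 ⟨u,h⟩, σ2 ⟨u,h⟩} : Finset V) := by
      rw [← hNeq ⟨u,h⟩, SimpleGraph.mem_neighborFinset]; exact hadj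
    rw [hg0]
    simp only [dif_pos h]
    simp only [Finset.mem_insert, Finset.mem_singleton] at hv
    rcases hv with rfl|rfl|rfl
    · rw [if_pos rfl, hE0]; exact norm_e0
    · rw [if_neg (hσ1ne0 ⟨u,h⟩), if_pos rfl, hE1]; exact norm_e1
    · rw [if_neg (hσ2ne0 ⟨u,h⟩), if_neg (hσ2ne1 ⟨u,h⟩), if_pos rfl, hE2]; exact norm_e2
  refine ⟨fun u v => g0 u v - g0 v u, ?_, ?_, ?_, ?_⟩
  · intro u v
    show g0 u v - g0 v u = -(g0 v u - g0 u v)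
    rw [neg_sub]
  · intro u v h
    show g0 u v - g0 v u = 0
    rw [hg0_nonadj u v h, hg0_nonadj v u (fun h' => h h'.symm), sub_zero]
  · intro u v h
    show 1 ≤ ‖g0 u v - g0 v u‖ ∧ ‖g0 u v - g0 v u‖ ≤ 2 - 1
    have hone : ‖g0 u v - g0 v u‖ = 1 := by
      by_cases hcu : c u = 0
      · have hcv : c v = 1 := hadj01 h hcu
        rw [hg0_B v u (by rw [hcv]; exact one_ne_zero), sub_zero]
        exact hg0_norm u v h hcu
      · have hcv : c v = 0 := hadj10 h hcu
        rw [hg0_B u v hcu, zero_sub, norm_neg]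
        exact hg0_norm v u h.symm hcv
    rw [hone]; norm_num
  · intro v
    show ∑ u, (g0 v u - g0 u v) = 0
    rw [Finset.sum_sub_distrib]
    have S1 : ∑ u, g0 v u = 0 := by
      by_cases hcv : c v = 0
      · have hpt : ∀ u, g0 v u = (if u = σ0 ⟨v,hcv⟩ then E0 else 0)
            + (if u = σ1 ⟨v,hcv⟩ then E1 else 0) + (if u = σ2 ⟨v,hcv⟩ then E2 else 0) := by
          intro u
          rw [hg0]
          simp only [dif_pos hcv]
          by_cases h0 : u = σ0 ⟨v,hcv⟩
          · rw [if_pos h0, if_pos h0, if_neg (fun h => hσ1ne0 ⟨v,hcv⟩ (h.symm.trans h0)),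
              if_neg (fun h => hσ2ne0 ⟨v,hcv⟩ (h.symm.trans h0)), add_zero, add_zero]
          · rw [if_neg h0, if_neg h0]
            by_cases h1 : u = σ1 ⟨v,hcv⟩
            · rw [if_pos h1, if_pos h1, if_neg (fun h => hσ2ne1 ⟨v,hcv⟩ (h.symm.trans h1)),
                zero_add, add_zero]
            · rw [if_neg h1, if_neg h1]
              by_cases h2 : u = σ2 ⟨v,hcv⟩
              · rw [if_pos h2, zero_add, zero_add]
              · rw [if_neg h2, add_zero, add_zero]
        rw [Finset.sum_congr rfl (fun u _ => hpt u), Finset.sum_add_distrib,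
          Finset.sum_add_distrib, Finset.sum_ite_eq' Finset.univ _ (fun _ => E0),
          Finset.sum_ite_eq' Finset.univ _ (fun _ => E1),
          Finset.sum_ite_eq' Finset.univ _ (fun _ => E2)]
        simp only [Finset.mem_univ, if_pos]
        rw [hE0, hE1, hE2]; exact esum
      · exact Finset.sum_eq_zero fun u _ => hg0_B v u hcv
    have S2 : ∑ u, g0 u v = 0 := by
      by_cases hcv : c v = 1
      · obtain ⟨a0, ha0⟩ := hσ0surj v hcv
        obtain ⟨a1, ha1⟩ := hσ1surj v hcv
        obtain ⟨a2, ha2⟩ := hσ2surj v hcv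
        have hpt : ∀ u, g0 u v = (if u = a0.val then E0 else 0)
            + (if u = a1.val then E1 else 0) + (if u = a2.val then E2 else 0) := by
          intro u
          by_cases hcu : c u = 0
          · rw [hg0]
            simp only [dif_pos hcu]
            have key0 : u = a0.val ↔ v = σ0 ⟨u, hcu⟩ := by
              constructor
              · intro h; rw [← ha0]; congr 1; exact (Subtype.ext h).symm
              · intro h
                have he : a0 = ⟨u, hcu⟩ := hσ0inj (by rw [ha0, h])
                rw [he]
            have key1 : u = a1.val ↔ v = σ1 ⟨u, hcu⟩ := by
              constructor
              · intro h; rw [← ha1]; congr 1; exact (Subtype.ext h).symm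
              · intro h
                have he : a1 = ⟨u, hcu⟩ := hσ1inj (by rw [ha1, h])
                rw [he]
            have key2 : u = a2.val ↔ v = σ2 ⟨u, hcu⟩ := by
              constructor
              · intro h; rw [← ha2]; congr 1; exact (Subtype.ext h).symm
              · intro h
                have he : a2 = ⟨u, hcu⟩ := hσ2inj (by rw [ha2, h])
                rw [he]
            simp only [key0, key1, key2]
            by_cases h0 : v = σ0 ⟨u,hcu⟩
            · rw [if_pos h0, if_pos h0, if_neg (fun h => hσ1ne0 ⟨u,hcu⟩ (h.symm.trans h0)),
                if_neg (fun h => hσ2ne0 ⟨u,hcu⟩ (h.symm.trans h0)), add_zero, add_zero]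
            · rw [if_neg h0, if_neg h0]
              by_cases h1 : v = σ1 ⟨u,hcu⟩
              · rw [if_pos h1, if_pos h1,
                  if_neg (fun h => hσ2ne1 ⟨u,hcu⟩ (h.symm.trans h1)), zero_add, add_zero]
              · rw [if_neg h1, if_neg h1]
                by_cases h2 : v = σ2 ⟨u,hcu⟩
                · rw [if_pos h2, zero_add, zero_add]
                · rw [if_neg h2, add_zero, add_zero]
          · rw [hg0_B u v hcu,
              if_neg (fun h => hcu (by rw [h]; exact a0.prop)),
              if_neg (fun h => hcu (by rw [h]; exact a1.prop)),
              if_neg (fun h => hcu (by rw [h]; exact a2.prop)), add_zero, add_zero]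
        rw [Finset.sum_congr rfl (fun u _ => hpt u), Finset.sum_add_distrib,
          Finset.sum_add_distrib, Finset.sum_ite_eq' Finset.univ _ (fun _ => E0),
          Finset.sum_ite_eq' Finset.univ _ (fun _ => E1),
          Finset.sum_ite_eq' Finset.univ _ (fun _ => E2)]
        simp only [Finset.mem_univ, if_pos]
        rw [hE0, hE1, hE2]; exact esum
      · refine Finset.sum_eq_zero fun u _ => ?_
        rw [hg0]
        simp only
        split_ifs with h h0 h1 h2
        · exact absurd (by rw [h0]; exact hσ0c ⟨u,h⟩) hcv
        · exact absurd (by rw [h1]; exact hσ1c ⟨u,h⟩) hcv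
        · exact absurd (by rw [h2]; exact hσ2c ⟨u,h⟩) hcv
        · rfl
        · rfl
    rw [S1, S2, sub_zero]

/-- A cubic graph admits a `(2,2)`-NZF (a 2-dimensional flow all of whose values are unit
vectors of `ℝ²`) if and only if it is bipartite (i.e. 2-colourable). -/
theorem stmt_11 {V : Type} [Fintype V] (G : SimpleGraph V) [DecidableRel G.Adj]
    (hcubic : ∀ v, G.degree v = 3) :
    HasNZF G 2 2 ↔ G.Colorable 2 := by
  constructor
  · rintro ⟨f, hf⟩
    exact forward G hcubic f hf
  · exact backward G hcubic
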